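/- Let a be odd with 3 ≤ a ≤ r−2 and let k_3, k_5, …, k_a be nonnegative integers. (i) If 2(k_3 + k_5 + ⋯ + k_a) = k, then D(ω_1 + k_3ω_3 + k_5ω_5 + ⋯ + k_aω_a) = 0. (ii) If 2(k_3 + k_5 + ⋯ + k_a) = k + 2, then D(k_3ω_3 + k_5ω_5 + ⋯ + k_aω_a) = 0. (These are the weights whose level-k affinizations have labels (k_1,k_0) = (1,−1), respectively (0,−2), and are fixed under the shifted action of the odd-length affine Weyl group elements s_0, respectively s_0 s_2 s_0.) -/

import Mathlib

/-- Orthogonal coordinates `u_i(λ)` of `λ + ρ` for the weight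
`λ = λ_1 ω_1 + ⋯ + λ_r ω_r` of `D_r` given in fundamental-weight coordinates. -/
noncomputable def uCoord (r : ℕ) (lam : ℕ → ℤ) (i : ℕ) : ℝ :=
  if i = r then ((lam r : ℝ) - (lam (r - 1) : ℝ)) / 2
  else (∑ j ∈ Finset.Icc i (r - 2), (lam j : ℝ))
      + ((lam (r - 1) : ℝ) + (lam r : ℝ)) / 2 + ((r : ℝ) - (i : ℝ))

/-- The level-`k` quantum dimension of the weight `λ` of `D_r`
(`h = 2r - 2` is the Coxeter number), given by the product over the
positive roots `e_i - e_j`, `e_i + e_j` (`1 ≤ i < j ≤ r`). -/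
noncomputable def qdimD (r k : ℕ) (lam : ℕ → ℤ) : ℝ :=
  ∏ p ∈ (Finset.Icc 1 r ×ˢ Finset.Icc 1 r).filter (fun p => p.1 < p.2),
    (Real.sin (Real.pi * (uCoord r lam p.1 - uCoord r lam p.2) / (2 * (r : ℝ) - 2 + (k : ℝ)))
      * Real.sin (Real.pi * (uCoord r lam p.1 + uCoord r lam p.2) / (2 * (r : ℝ) - 2 + (k : ℝ))))
    / (Real.sin (Real.pi * ((p.2 : ℝ) - (p.1 : ℝ)) / (2 * (r : ℝ) - 2 + (k : ℝ)))
      * Real.sin (Real.pi * (2 * (r : ℝ) - (p.1 : ℝ) - (p.2 : ℝ)) / (2 * (r : ℝ) - 2 + (k : ℝ))))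

lemma sumQ (r a : ℕ) (c : ℕ → ℕ) (i : ℕ) (hi : i ≤ 3) (har : a ≤ r - 2) :
    (∑ j ∈ Finset.Icc i (r - 2),
        (((if 3 ≤ j ∧ j ≤ a ∧ j % 2 = 1 then (c j : ℤ) else 0) : ℤ) : ℝ))
      = ∑ j ∈ (Finset.Icc 3 a).filter (fun j => j % 2 = 1), (c j : ℝ) := by
  simp only [apply_ite (Int.cast : ℤ → ℝ), Int.cast_zero, Int.cast_natCast]
  rw [← Finset.sum_filter]
  apply Finset.sum_congr
  · ext j
    simp only [Finset.mem_filter, Finset.mem_Icc]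
    omega
  · intros; rfl

/-- For odd `a` with `3 ≤ a ≤ r-2` and nonnegative integers `k_3, k_5, …, k_a`:
(i) if `2(k_3 + ⋯ + k_a) = k` then `D(ω_1 + k_3ω_3 + ⋯ + k_aω_a) = 0`;
(ii) if `2(k_3 + ⋯ + k_a) = k + 2` then `D(k_3ω_3 + ⋯ + k_aω_a) = 0`. -/
theorem stmt9 (r k : ℕ) (hr : 4 ≤ r) (hk : 1 ≤ k)
    (a : ℕ) (ha3 : 3 ≤ a) (har : a ≤ r - 2) (haodd : a % 2 = 1)
    (c : ℕ → ℕ) :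
    (2 * (∑ j ∈ (Finset.Icc 3 a).filter (fun j => j % 2 = 1), c j) = k →
      qdimD r k (fun j =>
        if j = 1 then 1 else if 3 ≤ j ∧ j ≤ a ∧ j % 2 = 1 then (c j : ℤ) else 0) = 0) ∧
    (2 * (∑ j ∈ (Finset.Icc 3 a).filter (fun j => j % 2 = 1), c j) = k + 2 →
      qdimD r k (fun j =>
        if 3 ≤ j ∧ j ≤ a ∧ j % 2 = 1 then (c j : ℤ) else 0) = 0) := by
  have hrR : (4 : ℝ) ≤ (r : ℝ) := by exact_mod_cast hr
  have hkR : (1 : ℝ) ≤ (k : ℝ) := by exact_mod_cast hk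
  have hN : (2 * (r : ℝ) - 2 + (k : ℝ)) ≠ 0 := by nlinarith
  set T : ℝ := ∑ j ∈ (Finset.Icc 3 a).filter (fun j => j % 2 = 1), (c j : ℝ) with hT
  constructor
  · intro hsum
    have hTk : 2 * T = (k : ℝ) := by
      rw [hT, ← Nat.cast_sum]
      exact_mod_cast congrArg (Nat.cast : ℕ → ℝ) hsum
    set lam : ℕ → ℤ := fun j =>
      if j = 1 then 1 else if 3 ≤ j ∧ j ≤ a ∧ j % 2 = 1 then (c j : ℤ) else 0 with hlam
    have hlr1 : lam (r - 1) = 0 := by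
      rw [hlam]; simp only; rw [if_neg (by omega), if_neg (by omega)]
    have hlr : lam r = 0 := by
      rw [hlam]; simp only; rw [if_neg (by omega), if_neg (by omega)]
    -- sum over Icc 2 (r-2)
    have hs2 : (∑ j ∈ Finset.Icc 2 (r - 2), ((lam j : ℤ) : ℝ)) = T := by
      rw [hT, ← sumQ r a c 2 (by omega) har]
      apply Finset.sum_congr rfl
      intro j hj
      have hj1 : j ≠ 1 := by simp only [Finset.mem_Icc] at hj; omega
      rw [hlam]; simp only [if_neg hj1]
    have hs1 : (∑ j ∈ Finset.Icc 1 (r - 2), ((lam j : ℤ) : ℝ)) = 1 + T := by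
      have hins : Finset.Icc 1 (r - 2) = insert 1 (Finset.Icc 2 (r - 2)) := by
        ext j
        simp only [Finset.mem_Icc, Finset.mem_insert]
        omega
      rw [hins, Finset.sum_insert (by simp), hs2]
      rw [hlam]; norm_num
    have hu1 : uCoord r lam 1 = 1 + T + ((r : ℝ) - 1) := by
      rw [uCoord, if_neg (by omega), hs1, hlr1, hlr]
      push_cast
      ring
    have hu2 : uCoord r lam 2 = T + ((r : ℝ) - 2) := by
      rw [uCoord, if_neg (by omega), hs2, hlr1, hlr]
      push_cast
      ring
    rw [qdimD]
    apply Finset.prod_eq_zero (i := ((1 : ℕ), (2 : ℕ)))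
    · simp only [Finset.mem_filter, Finset.mem_product, Finset.mem_Icc]
      omega
    · have harg : uCoord r lam 1 + uCoord r lam 2 = 2 * (r : ℝ) - 2 + (k : ℝ) := by
        rw [hu1, hu2]; linarith
      rw [harg,
        show Real.pi * (2 * (r : ℝ) - 2 + (k : ℝ)) / (2 * (r : ℝ) - 2 + (k : ℝ)) = Real.pi
          from by rw [mul_div_assoc, div_self hN, mul_one],
        Real.sin_pi, mul_zero, zero_div]
  · intro hsum
    have hTk : 2 * T = (k : ℝ) + 2 := by
      rw [hT, ← Nat.cast_sum]
      exact_mod_cast congrArg (Nat.cast : ℕ → ℝ) hsum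
    set lam : ℕ → ℤ := fun j =>
      if 3 ≤ j ∧ j ≤ a ∧ j % 2 = 1 then (c j : ℤ) else 0 with hlam
    have hlr1 : lam (r - 1) = 0 := by
      rw [hlam]; simp only; rw [if_neg (by omega)]
    have hlr : lam r = 0 := by
      rw [hlam]; simp only; rw [if_neg (by omega)]
    have hs1 : (∑ j ∈ Finset.Icc 1 (r - 2), ((lam j : ℤ) : ℝ)) = T := by
      rw [hT, ← sumQ r a c 1 (by omega) har]
    have hs3 : (∑ j ∈ Finset.Icc 3 (r - 2), ((lam j : ℤ) : ℝ)) = T := by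
      rw [hT, ← sumQ r a c 3 (by omega) har]
    have hu1 : uCoord r lam 1 = T + ((r : ℝ) - 1) := by
      rw [uCoord, if_neg (by omega), hs1, hlr1, hlr]
      push_cast
      ring
    have hu3 : uCoord r lam 3 = T + ((r : ℝ) - 3) := by
      rw [uCoord, if_neg (by omega), hs3, hlr1, hlr]
      push_cast
      ring
    rw [qdimD]
    apply Finset.prod_eq_zero (i := ((1 : ℕ), (3 : ℕ)))
    · simp only [Finset.mem_filter, Finset.mem_product, Finset.mem_Icc]
      omega
    · have harg : uCoord r lam 1 + uCoord r lam 3 = 2 * (r : ℝ) - 2 + (k : ℝ) := by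
        rw [hu1, hu3]; linarith
      rw [harg,
        show Real.pi * (2 * (r : ℝ) - 2 + (k : ℝ)) / (2 * (r : ℝ) - 2 + (k : ℝ)) = Real.pi
          from by rw [mul_div_assoc, div_self hN, mul_one],
        Real.sin_pi, mul_zero, zero_div]
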